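/- Let k ∈ ℤ and set η(x) := (4kπ/A(x))·tanh(2kπ ∫₀ˣ dy/A(y)) and φ := A'/A on (0,∞). Then: (i) B_k'/B_k = η + φ on (0,∞); (ii) η is nonnegative; (iii) φ is nonnegative and decreasing; (iv) the function (1/2)η' − (1/4)η² + (B_k'/(2B_k))·η is identically equal to (2kπ)²/A(x)², which is nonnegative and decreasing on (0,∞). -/

import Mathlib

open MeasureTheory Set Filter

/-- The standing assumptions on the coefficient `A`. -/
def ACond (A : ℝ → ℝ) : Prop :=
  ContinuousOn A (Set.Ici 0) ∧
  ContDiffOn ℝ 1 A (Set.Ioi 0) ∧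
  (∀ x > 0, 0 < A x) ∧
  IntegrableOn (fun x => 1 / A x) (Set.Ioc 0 1) ∧
  (∀ x > 0, 0 ≤ deriv A x / A x) ∧
  AntitoneOn (fun x => deriv A x / A x) (Set.Ioi 0)

/-- `ζ_k(x) = cosh(2kπ ∫₀ˣ dy/A(y))`. -/
noncomputable def zeta (A : ℝ → ℝ) (k : ℤ) (x : ℝ) : ℝ :=
  Real.cosh (2 * (k : ℝ) * Real.pi * ∫ y in (0 : ℝ)..x, 1 / A y)

/-- `B_k(x) = A(x) ζ_k(x)²`. -/
noncomputable def Bfun (A : ℝ → ℝ) (k : ℤ) (x : ℝ) : ℝ :=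
  A x * (zeta A k x) ^ 2

/-- `η(x) = (4kπ/A(x))·tanh(2kπ ∫₀ˣ dy/A(y))`. -/
noncomputable def etaFun (A : ℝ → ℝ) (k : ℤ) (x : ℝ) : ℝ :=
  (4 * (k : ℝ) * Real.pi / A x) * Real.tanh (2 * (k : ℝ) * Real.pi * ∫ y in (0 : ℝ)..x, 1 / A y)

/-- With `η` and `φ = A'/A` as above: (i) `B_k'/B_k = η + φ` on `(0,∞)`;
(ii) `η ≥ 0`; (iii) `φ` is nonnegative and decreasing; (iv) `(1/2)η' − (1/4)η² + (B_k'/(2B_k))η`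
equals `(2kπ)²/A²`, which is nonnegative and decreasing on `(0,∞)`. -/
theorem stmt2 (A : ℝ → ℝ) (hA : ACond A) (k : ℤ) :
    (∀ x > 0, deriv (Bfun A k) x / Bfun A k x = etaFun A k x + deriv A x / A x) ∧
    (∀ x > 0, 0 ≤ etaFun A k x) ∧
    ((∀ x > 0, 0 ≤ deriv A x / A x) ∧ AntitoneOn (fun x => deriv A x / A x) (Set.Ioi 0)) ∧
    (∀ x > 0,
      (1 / 2) * deriv (etaFun A k) x - (1 / 4) * (etaFun A k x) ^ 2
          + (deriv (Bfun A k) x / (2 * Bfun A k x)) * etaFun A k x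
        = (2 * (k : ℝ) * Real.pi) ^ 2 / (A x) ^ 2) ∧
    (∀ x > 0, 0 ≤ (2 * (k : ℝ) * Real.pi) ^ 2 / (A x) ^ 2) ∧
    AntitoneOn (fun x => (2 * (k : ℝ) * Real.pi) ^ 2 / (A x) ^ 2) (Set.Ioi 0) := by
  obtain ⟨hAc, hAd, hApos, hAint, hphi0, hphiA⟩ := hA
  have hinv : ContinuousOn (fun y => 1 / A y) (Set.Ioi 0) :=
    continuousOn_const.div (hAc.mono Set.Ioi_subset_Ici_self) fun y hy => (hApos y hy).ne'
  have hA0 : 0 ≤ A 0 := by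
    have ht : Tendsto A (nhdsWithin 0 (Set.Ioi 0)) (nhds (A 0)) :=
      (hAc 0 Set.self_mem_Ici).mono_left (nhdsWithin_mono _ Set.Ioi_subset_Ici_self)
    exact ge_of_tendsto ht (eventually_nhdsWithin_of_forall fun y hy => (hApos y hy).le)
  have hFd : ∀ x > 0, HasDerivAt (fun t => ∫ y in (0:ℝ)..t, 1 / A y) (1 / A x) x := by
    intro x hx
    have hii : IntervalIntegrable (fun y => 1 / A y) volume 0 x := by
      rw [intervalIntegrable_iff_integrableOn_Ioc_of_le hx.le]
      rcases le_or_gt x 1 with h | h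
      · exact hAint.mono_set (Set.Ioc_subset_Ioc_right h)
      · rw [← Set.Ioc_union_Ioc_eq_Ioc (le_of_lt one_pos) h.le]
        exact hAint.union
          (((hinv.mono (fun y hy => lt_of_lt_of_le one_pos hy.1)).integrableOn_Icc).mono_set
            Set.Ioc_subset_Icc_self)
    exact intervalIntegral.integral_hasDerivAt_right hii
      (hinv.stronglyMeasurableAtFilter isOpen_Ioi x hx)
      (hinv.continuousAt (Ioi_mem_nhds hx))
  have hFnn : ∀ x > 0, 0 ≤ ∫ y in (0:ℝ)..x, 1 / A y := by
    intro x hx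
    apply intervalIntegral.integral_nonneg hx.le
    intro y hy
    rcases hy.1.eq_or_lt with h | h
    · rw [← h]; exact one_div_nonneg.mpr hA0
    · exact one_div_nonneg.mpr (hApos y h).le
  set c : ℝ := 2 * (k : ℝ) * Real.pi with hc
  -- (ii)
  have hii : ∀ x > 0, 0 ≤ etaFun A k x := by
    intro x hx
    have ha := hApos x hx
    have ht := hFnn x hx
    have key : 0 ≤ c * Real.tanh (c * ∫ y in (0:ℝ)..x, 1 / A y) := by
      rw [Real.tanh_eq_sinh_div_cosh]
      rcases le_or_gt 0 c with h | h
      · exact mul_nonneg h (div_nonneg (Real.sinh_nonneg_iff.mpr (mul_nonneg h ht))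
          (Real.cosh_pos _).le)
      · have h1 : Real.sinh (c * ∫ y in (0:ℝ)..x, 1 / A y) / Real.cosh (c * ∫ y in (0:ℝ)..x, 1 / A y) ≤ 0 :=
          div_nonpos_of_nonpos_of_nonneg
            (Real.sinh_nonpos_iff.mpr (mul_nonpos_of_nonpos_of_nonneg h.le ht)) (Real.cosh_pos _).le
        have h2 := mul_nonneg (neg_nonneg.mpr h.le) (neg_nonneg.mpr h1)
        rwa [neg_mul_neg] at h2
    have heq : etaFun A k x = 2 / A x * (c * Real.tanh (c * ∫ y in (0:ℝ)..x, 1 / A y)) := by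
      rw [etaFun, hc]; ring
    rw [heq]
    exact mul_nonneg (by positivity) key
  -- derivative computations
  have main : ∀ x > 0, (deriv (Bfun A k) x / Bfun A k x = etaFun A k x + deriv A x / A x) ∧
      ((1 / 2) * deriv (etaFun A k) x - (1 / 4) * (etaFun A k x) ^ 2
          + (deriv (Bfun A k) x / (2 * Bfun A k x)) * etaFun A k x = c ^ 2 / (A x) ^ 2) := by
    intro x hx
    have ha : (0:ℝ) < A x := hApos x hx
    have hF := hFd x hx
    have hAx : HasDerivAt A (deriv A x) x :=
      ((hAd.differentiableOn one_ne_zero).differentiableAt (Ioi_mem_nhds hx)).hasDerivAt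
    have hcF : HasDerivAt (fun t => c * ∫ y in (0:ℝ)..t, 1 / A y) (c * (1 / A x)) x :=
      hF.const_mul c
    have hch := hcF.cosh
    have hsh := hcF.sinh
    set sh := Real.sinh (c * ∫ y in (0:ℝ)..x, 1 / A y) with hshdef
    set ch := Real.cosh (c * ∫ y in (0:ℝ)..x, 1 / A y) with hchdef
    have hchpos : 0 < ch := Real.cosh_pos _
    have hsq : ch ^ 2 - sh ^ 2 = 1 := Real.cosh_sq_sub_sinh_sq _
    have hBfun : Bfun A k = fun t => A t * Real.cosh (c * ∫ y in (0:ℝ)..t, 1 / A y) ^ 2 := rfl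
    have hBx := hAx.mul (hch.pow 2)
    have hdB : deriv (Bfun A k) x
        = deriv A x * ch ^ 2 + A x * ((2:ℕ) * ch ^ (2 - 1) * (sh * (c * (1 / A x)))) := by
      rw [hBfun]; exact hBx.deriv
    have hBval : Bfun A k x = A x * ch ^ 2 := rfl
    have hefun : etaFun A k = fun t =>
        (2 * c) * (Real.sinh (c * ∫ y in (0:ℝ)..t, 1 / A y)
          / (A t * Real.cosh (c * ∫ y in (0:ℝ)..t, 1 / A y))) := by
      funext t
      rw [etaFun, Real.tanh_eq_sinh_div_cosh, hc]
      ring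
    have hne : A x * ch ≠ 0 := by positivity
    have hEx := (hsh.div (hAx.mul hch) hne).const_mul (2 * c)
    have hdE : deriv (etaFun A k) x
        = (2 * c) * ((ch * (c * (1 / A x)) * (A x * ch)
            - sh * (deriv A x * ch + A x * (sh * (c * (1 / A x))))) / (A x * ch) ^ 2) := by
      rw [hefun]; exact hEx.deriv
    have hEval : etaFun A k x = (2 * c) * (sh / (A x * ch)) := by
      rw [hefun]
    constructor
    · rw [hdB, hBval, hEval]
      field_simp
      ring
    · rw [hdB, hBval, hEval, hdE]
      field_simp
      norm_num only
      first
        | linear_combination (c^2 * (A x)^2 * ch^2) * hsq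
        | linear_combination (2 * c^2 * (A x)^2 * ch^2) * hsq
        | linear_combination (4 * c^2 * (A x)^2 * ch^2) * hsq
        | linear_combination (c^2 * (A x)^2) * hsq
        | linear_combination (c^2 * ch^2) * hsq
        | linear_combination (c^2) * hsq
        | linear_combination (-(c^2 * (A x)^2 * ch^2)) * hsq
        | nlinarith [hsq]
  -- antitone part
  have hmono : MonotoneOn A (Set.Ioi 0) := by
    apply monotoneOn_of_deriv_nonneg (convex_Ioi 0) (hAc.mono Set.Ioi_subset_Ici_self)
    · rw [interior_Ioi]; exact hAd.differentiableOn one_ne_zero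
    · intro x hx
      rw [interior_Ioi] at hx
      have ha := hApos x hx
      have h := mul_nonneg (hphi0 x hx) ha.le
      rwa [div_mul_cancel₀ _ ha.ne'] at h
  have hanti : AntitoneOn (fun x => c ^ 2 / (A x) ^ 2) (Set.Ioi 0) := by
    intro a haa b hbb hab
    have h1 : 0 < A a := hApos a haa
    have h2 : A a ≤ A b := hmono haa hbb hab
    have h3 : A a ^ 2 ≤ A b ^ 2 := by nlinarith
    exact div_le_div_of_nonneg_left (sq_nonneg c) (by positivity) h3
  exact ⟨fun x hx => (main x hx).1, hii, ⟨hphi0, hphiA⟩, fun x hx => (main x hx).2,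
    fun x hx => by positivity, hanti⟩
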